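/- Let B be an integral domain, A ⊆ B a subring, and n ≥ 1 an integer. If f ∈ End_A(A^n) is an n-tuple of polynomials with coefficients in A which, regarded as an endomorphism over B, admits a two-sided compositional inverse with coefficients in B, and if Jac(f) is a unit of A, then the compositional inverse of f has all its coefficients in A, i.e. f ∈ Aut_A(A^n). Consequently Aut_A(A^n) = { f ∈ End_A(A^n) ∩ Aut_B(A^n) : Jac(f) ∈ A^* }. -/

import Mathlib

open MvPolynomial

/-- Endomorphisms of affine `n`-space over `R`: `n`-tuples of polynomials in
`R[x_1,…,x_n]`, with composition given by substitution. -/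
def PolyEnd (R : Type*) [CommRing R] (n : ℕ) : Type _ := Fin n → MvPolynomial (Fin n) R

namespace PolyEnd

variable {R S : Type*} [CommRing R] [CommRing S] {n : ℕ}

noncomputable instance : Monoid (PolyEnd R n) where
  one := fun i => X i
  mul f g := fun i => bind₁ g (f i)
  mul_assoc f g h := funext fun i => by
    show bind₁ h (bind₁ g (f i)) = bind₁ (fun j => bind₁ h (g j)) (f i)
    exact bind₁_bind₁ g h (f i)
  one_mul f := funext fun i => by
    show bind₁ f (X i) = f i
    exact bind₁_X_right f i
  mul_one f := funext fun i => by
    show bind₁ X (f i) = f i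
    rw [bind₁_X_left, AlgHom.id_apply]

@[simp] lemma mul_apply (f g : PolyEnd R n) (i : Fin n) :
    (f * g) i = bind₁ g (f i) := rfl

@[simp] lemma one_apply (i : Fin n) : (1 : PolyEnd R n) i = X i := rfl

/-- The Jacobian determinant of an endomorphism. -/
noncomputable def jac (f : PolyEnd R n) : MvPolynomial (Fin n) R :=
  (Matrix.of fun i j => pderiv j (f i)).det

/-- The chain rule for partial derivatives of a substitution. -/
lemma pderiv_bind₁ (g : Fin n → MvPolynomial (Fin n) R)
    (p : MvPolynomial (Fin n) R) (j : Fin n) :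
    pderiv j (bind₁ g p) = ∑ i, bind₁ g (pderiv i p) * pderiv j (g i) := by
  induction p using MvPolynomial.induction_on with
  | C a => simp
  | add p q hp hq => simp [hp, hq, Finset.sum_add_distrib, add_mul]
  | mul_X p i hp =>
      rw [map_mul, bind₁_X_right, pderiv_mul, hp]
      have key : ∀ l : Fin n, bind₁ g (pderiv l (p * X i)) * pderiv j (g l)
          = bind₁ g (pderiv l p) * pderiv j (g l) * g i
            + (if l = i then bind₁ g p * pderiv j (g i) else 0) := by
        intro l
        rw [pderiv_mul, pderiv_X]
        by_cases h : l = i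
        · subst h
          simp only [Pi.single_apply, if_pos rfl, map_add, map_mul, bind₁_X_right,
            bind₁_C_right, if_pos rfl]
          ring_nf
          simp [mul_comm, mul_left_comm, mul_assoc]
        · simp only [Pi.single_apply, if_neg (Ne.symm h), if_neg h, mul_zero, map_mul,
            map_add, map_zero, add_zero, bind₁_X_right]
          ring
      rw [Finset.sum_congr rfl fun l _ => key l, Finset.sum_add_distrib]
      simp [Finset.sum_mul]

lemma jac_one : jac (1 : PolyEnd R n) = 1 := by
  unfold jac
  have : (Matrix.of fun i j => pderiv j ((1 : PolyEnd R n) i))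
      = (1 : Matrix (Fin n) (Fin n) (MvPolynomial (Fin n) R)) := by
    ext i j
    simp [Matrix.one_apply, pderiv_X, Pi.single_apply, eq_comm]
  rw [this, Matrix.det_one]

/-- The chain rule for Jacobians. -/
lemma jac_mul (f g : PolyEnd R n) : jac (f * g) = bind₁ g (jac f) * jac g := by
  unfold jac
  have : (Matrix.of fun i j => pderiv j ((f * g) i))
      = (Matrix.of fun i l => pderiv l (f i)).map (bind₁ g)
        * (Matrix.of fun l j => pderiv j (g l)) := by
    ext i j
    simp [Matrix.mul_apply]
    exact congrArg _ (pderiv_bind₁ g (f i) j)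
  rw [this, Matrix.det_mul]
  congr 1
  exact ((bind₁ g).map_det (Matrix.of fun i l => pderiv l (f i))).symm

end PolyEnd

/-- Automorphisms of affine `n`-space over `R` : endomorphisms admitting a two-sided
compositional inverse. -/
abbrev PolyAut (R : Type*) [CommRing R] (n : ℕ) := (PolyEnd R n)ˣ

namespace PolyAut

variable {R S : Type*} [CommRing R] [CommRing S] {n : ℕ}

lemma bind₁_val_injective (f : PolyAut R n) :
    Function.Injective (bind₁ (σ := Fin n) (f.val : Fin n → MvPolynomial (Fin n) R)) := by
  intro p q h
  have hinv : ∀ r : MvPolynomial (Fin n) R, bind₁ (f.inv : Fin n → _) (bind₁ (f.val : Fin n → _) r) = r := by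
    intro r
    refine (bind₁_bind₁ _ _ r).trans ?_
    have : (fun i => bind₁ (f.inv : Fin n → _) ((f.val : Fin n → _) i)) = (f.val * f.inv : PolyEnd R n) := rfl
    rw [this, f.val_inv]
    show bind₁ (fun i => X i) r = r
    rw [show (fun i : Fin n => (X i : MvPolynomial (Fin n) R)) = X from rfl,
      bind₁_X_left, AlgHom.id_apply]
  calc p = bind₁ (f.inv : Fin n → _) (bind₁ (f.val : Fin n → _) p) := (hinv p).symm
    _ = bind₁ (f.inv : Fin n → _) (bind₁ (f.val : Fin n → _) q) := by rw [h]
    _ = q := hinv q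

end PolyAut

/-- The subgroup of automorphisms of Jacobian `1`. -/
noncomputable def SAutGrp (R : Type*) [CommRing R] (n : ℕ) : Subgroup (PolyAut R n) where
  carrier := {f | PolyEnd.jac f.val = 1}
  one_mem' := PolyEnd.jac_one
  mul_mem' := by
    intro f g hf hg
    show PolyEnd.jac (f.val * g.val) = 1
    rw [PolyEnd.jac_mul, hf, hg, map_one, one_mul]
  inv_mem' := by
    intro f hf
    show PolyEnd.jac f.inv = 1
    apply PolyAut.bind₁_val_injective f
    have h1 : PolyEnd.jac (f.inv * f.val) = 1 := by
      rw [f.inv_val]; exact PolyEnd.jac_one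
    rw [PolyEnd.jac_mul, hf, mul_one] at h1
    rw [map_one]
    exact h1

lemma mem_SAutGrp_iff {R : Type*} [CommRing R] {n : ℕ} (f : PolyAut R n) :
    f ∈ SAutGrp R n ↔ PolyEnd.jac f.val = 1 := Iff.rfl

section Translations

variable {R : Type*} [CommRing R] {n : ℕ}

/-- The translation endomorphism `(x_1 + c_1, …, x_n + c_n)`. -/
noncomputable def translEnd (c : Fin n → R) : PolyEnd R n := fun i => X i + C (c i)

lemma translEnd_mul (c d : Fin n → R) :
    translEnd c * translEnd d = translEnd (c + d) := by
  funext i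
  show bind₁ (translEnd d) (translEnd c i) = translEnd (c + d) i
  simp only [translEnd, map_add, bind₁_C_right]
  rw [show bind₁ (translEnd d) (X i) = translEnd d i from bind₁_X_right _ i]
  rw [show bind₁ (translEnd d) (C (c i)) = C (c i) from bind₁_C_right _ _]
  show X i + C (d i) + C (c i) = X i + C (c i + d i)
  rw [map_add]; ring

lemma translEnd_zero : translEnd (0 : Fin n → R) = 1 := by
  funext i
  show X i + C 0 = X i
  simp

/-- The translation automorphism `(x_1 + c_1, …, x_n + c_n)`. -/
noncomputable def transl (c : Fin n → R) : PolyAut R n where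
  val := translEnd c
  inv := translEnd (-c)
  val_inv := by rw [translEnd_mul, add_neg_cancel, translEnd_zero]
  inv_val := by rw [translEnd_mul, neg_add_cancel, translEnd_zero]

@[simp] lemma transl_val (c : Fin n → R) : (transl c).val = translEnd c := rfl

lemma jac_translEnd (c : Fin n → R) : PolyEnd.jac (translEnd c) = 1 := by
  unfold PolyEnd.jac
  have : (Matrix.of fun i j => pderiv j (translEnd c i))
      = (1 : Matrix (Fin n) (Fin n) (MvPolynomial (Fin n) R)) := by
    ext i j
    simp [translEnd, Matrix.one_apply, pderiv_X, Pi.single_apply, eq_comm]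
  rw [this, Matrix.det_one]

lemma transl_mem_SAutGrp (c : Fin n → R) : transl c ∈ SAutGrp R n := jac_translEnd c

/-- The translation as element of `SAut`. -/
noncomputable def translS (c : Fin n → R) : ↥(SAutGrp R n) := ⟨transl c, transl_mem_SAutGrp c⟩

/-- `f` is a translation. -/
def IsTranslation (f : PolyAut R n) : Prop := ∃ c : Fin n → R, f = transl c

end Translations

section Linear

variable {R : Type*} [CommRing R] {n : ℕ}

/-- The linear endomorphism associated with a matrix. -/
noncomputable def linEnd (M : Matrix (Fin n) (Fin n) R) : PolyEnd R n :=
  fun i => ∑ j, C (M i j) * X j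

/-- `f` is a linear automorphism (i.e. in the image of `GL_n`). -/
def IsLinear (f : PolyAut R n) : Prop := ∃ M : Matrix (Fin n) (Fin n) R, f.val = linEnd M

/-- `f` is a linear automorphism given by a matrix of determinant 1
(i.e. in the image of `SL_n`). -/
def MemSL (f : PolyAut R n) : Prop :=
  ∃ M : Matrix (Fin n) (Fin n) R, M.det = 1 ∧ f.val = linEnd M

/-- `f` is a triangular automorphism. -/
def IsTriangular (f : PolyAut R n) : Prop :=
  ∃ (a : Fin n → Rˣ) (b : Fin n → MvPolynomial (Fin n) R),
    (∀ i : Fin n, b i ∈ MvPolynomial.supported R {j : Fin n | (j : ℕ) < (i : ℕ)}) ∧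
    ∀ i : Fin n, f.val i = C ((a i : R)) * X i + b i

/-- The tame subgroup, generated by linear and triangular automorphisms. -/
noncomputable def TameGrp (R : Type*) [CommRing R] (n : ℕ) : Subgroup (PolyAut R n) :=
  Subgroup.closure {f | IsLinear f ∨ IsTriangular f}

end Linear

section Map

variable {R S : Type*} [CommRing R] [CommRing S] {n : ℕ}

/-- Applying a ring homomorphism to all coefficients, as a monoid homomorphism of
endomorphisms of affine `n`-space. -/
noncomputable def endMapHom (φ : R →+* S) : PolyEnd R n →* PolyEnd S n where
  toFun f := fun i => MvPolynomial.map φ (f i)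
  map_one' := funext fun i => by
    show MvPolynomial.map φ (X i) = X i
    simp
  map_mul' f g := funext fun i => by
    show MvPolynomial.map φ (bind₁ g (f i)) = bind₁ (fun j => MvPolynomial.map φ (g j)) (MvPolynomial.map φ (f i))
    exact map_bind₁ _ _ _

/-- Applying a ring homomorphism to all coefficients, on automorphisms. -/
noncomputable def autMap (φ : R →+* S) : PolyAut R n →* PolyAut S n :=
  Units.map (endMapHom φ)

lemma jac_endMapHom (φ : R →+* S) (f : PolyEnd R n) :
    PolyEnd.jac (endMapHom φ f) = MvPolynomial.map φ (PolyEnd.jac f) := by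
  unfold PolyEnd.jac
  have : (Matrix.of fun i j => pderiv j ((endMapHom φ f) i))
      = (Matrix.of fun i j => pderiv j (f i)).map (MvPolynomial.map φ) :=
    Matrix.ext fun i j => by
      exact (pderiv_map : pderiv j (MvPolynomial.map φ (f i)) = MvPolynomial.map φ (pderiv j (f i)))
  rw [this, RingHom.map_det]
  rfl

/-- Specialisation of an automorphism over `R[t]` at a value `t₀ ∈ R`. -/
noncomputable def specAut (t0 : R) : PolyAut (Polynomial R) n →* PolyAut R n :=
  autMap (Polynomial.evalRingHom t0)

lemma specAut_mem_SAutGrp (h : PolyAut (Polynomial R) n)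
    (hh : h ∈ SAutGrp (Polynomial R) n) (t0 : R) :
    specAut t0 h ∈ SAutGrp R n := by
  show PolyEnd.jac ((specAut t0 h).val) = 1
  have : (specAut t0 h).val = endMapHom (Polynomial.evalRingHom t0) h.val := rfl
  rw [this, jac_endMapHom, hh, map_one]

/-- Specialisation, from `SAut` over `R[t]` to `SAut` over `R`. -/
noncomputable def specSAut (t0 : R) (h : PolyAut (Polynomial R) n)
    (hh : h ∈ SAutGrp (Polynomial R) n) : ↥(SAutGrp R n) :=
  ⟨specAut t0 h, specAut_mem_SAutGrp h hh t0⟩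

/-- A subgroup `N` of `SAut_k(𝔸ⁿ)` is closed under specialisation if for every
automorphism `h` over `k[t]` of Jacobian `1` all of whose specialisations at
`t₀ ≠ 0` lie in `N`, the specialisation at `0` also lies in `N`. Every subgroup
that is closed in the ind-topology has this property. -/
def ClosedUnderSpec {R : Type*} [CommRing R] {n : ℕ} (N : Subgroup ↥(SAutGrp R n)) : Prop :=
  ∀ (h : PolyAut (Polynomial R) n) (hh : h ∈ SAutGrp (Polynomial R) n),
    (∀ t0 : R, t0 ≠ 0 → specSAut t0 h hh ∈ N) → specSAut 0 h hh ∈ N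

/-- A subgroup `N` of `Aut_k(𝔸ⁿ)` is closed under specialisation if for every
automorphism `h` over `k[t]` all of whose specialisations at `t₀ ≠ 0` lie in `N`,
the specialisation at `0` also lies in `N`. -/
def ClosedUnderSpecAut {R : Type*} [CommRing R] {n : ℕ} (N : Subgroup (PolyAut R n)) : Prop :=
  ∀ h : PolyAut (Polynomial R) n,
    (∀ t0 : R, t0 ≠ 0 → specAut t0 h ∈ N) → specAut 0 h ∈ N

end Map



open MvPolynomial

namespace JacAux

variable {B : Type*} [CommRing B] {n : ℕ}

/-- total degree of a monomial exponent -/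
def degF (m : Fin n →₀ ℕ) : ℕ := ∑ j, m j

lemma degF_add (a b : Fin n →₀ ℕ) : degF (a + b) = degF a + degF b := by
  simp [degF, Finsupp.add_apply, Finset.sum_add_distrib]

lemma degF_eq_zero_iff {m : Fin n →₀ ℕ} : degF m = 0 ↔ m = 0 := by
  constructor
  · intro h
    ext j
    have := Finset.sum_eq_zero_iff.mp h j (Finset.mem_univ j)
    simpa using this
  · rintro rfl; simp [degF]

/-- The subring of polynomials whose coefficients in degrees `≤ e` lie in `A`. -/
def Wring (A : Subring B) (e : ℕ) : Subring (MvPolynomial (Fin n) B) where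
  carrier := {p | ∀ m : Fin n →₀ ℕ, degF m ≤ e → coeff m p ∈ A}
  zero_mem' := by intro m _; rw [coeff_zero]; exact zero_mem _
  one_mem' := by
    intro m _
    rw [← C_1, coeff_C]
    split
    · exact one_mem _
    · exact zero_mem _
  add_mem' := by
    intro p q hp hq m hm
    rw [coeff_add]
    exact add_mem (hp m hm) (hq m hm)
  neg_mem' := by
    intro p hp m hm
    rw [coeff_neg]
    exact neg_mem (hp m hm)
  mul_mem' := by
    intro p q hp hq m hm
    rw [coeff_mul]
    refine Subring.sum_mem _ fun x hx => ?_
    rw [Finset.HasAntidiagonal.mem_antidiagonal] at hx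
    have hd : degF x.1 + degF x.2 = degF m := by rw [← degF_add, hx]
    exact mul_mem (hp x.1 (by omega)) (hq x.2 (by omega))

lemma C_mem_Wring {A : Subring B} {e : ℕ} {a : B} (ha : a ∈ A) :
    (C a : MvPolynomial (Fin n) B) ∈ Wring A e := by
  intro m _
  rw [coeff_C]
  split
  · exact ha
  · exact zero_mem _

lemma X_mem_Wring {A : Subring B} {e : ℕ} (i : Fin n) :
    (X i : MvPolynomial (Fin n) B) ∈ Wring A e := by
  intro m _
  rw [coeff_X']
  split
  · exact one_mem _
  · exact zero_mem _

/-- degree-boosting multiplication: product of two order-`≥1` elements of `Wring A e`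
lies in `Wring A (e+1)`. -/
lemma mul_mem_Wring_succ {A : Subring B} {e : ℕ} {p q : MvPolynomial (Fin n) B}
    (hp0 : constantCoeff p = 0) (hq0 : constantCoeff q = 0)
    (hp : p ∈ Wring A e) (hq : q ∈ Wring A e) : p * q ∈ Wring A (e + 1) := by
  intro m hm
  rw [coeff_mul]
  refine Subring.sum_mem _ fun x hx => ?_
  rw [Finset.HasAntidiagonal.mem_antidiagonal] at hx
  have hd : degF x.1 + degF x.2 = degF m := by rw [← degF_add, hx]
  rcases eq_or_ne x.1 0 with h1 | h1
  · have : coeff x.1 p = 0 := by rw [h1]; exact hp0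
    rw [this, zero_mul]; exact zero_mem _
  rcases eq_or_ne x.2 0 with h2 | h2
  · have : coeff x.2 q = 0 := by rw [h2]; exact hq0
    rw [this, mul_zero]; exact zero_mem _
  have e1 : 1 ≤ degF x.1 := by
    rcases Nat.eq_zero_or_pos (degF x.1) with h | h
    · exact absurd (degF_eq_zero_iff.mp h) h1
    · exact h
  have e2 : 1 ≤ degF x.2 := by
    rcases Nat.eq_zero_or_pos (degF x.2) with h | h
    · exact absurd (degF_eq_zero_iff.mp h) h2
    · exact h
  exact mul_mem (hp x.1 (by omega)) (hq x.2 (by omega))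

end JacAux

namespace JacAux

variable {B : Type*} [CommRing B] {n : ℕ}

lemma prod_pow_mem_Wring {A : Subring B} {e : ℕ} {q : Fin n → MvPolynomial (Fin n) B}
    (hq : ∀ j, q j ∈ Wring A e) (ν : Fin n → ℕ) :
    (∏ j, q j ^ ν j) ∈ Wring A e :=
  Subring.prod_mem _ fun j _ => Subring.pow_mem _ (hq j) _

lemma constantCoeff_prod_pow {q : Fin n → MvPolynomial (Fin n) B}
    (hq0 : ∀ j, constantCoeff (q j) = 0) {ν : Fin n → ℕ} (hν : ∃ j, ν j ≠ 0) :
    constantCoeff (∏ j, q j ^ ν j) = 0 := by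
  obtain ⟨j0, hj0⟩ := hν
  rw [map_prod]
  refine Finset.prod_eq_zero (Finset.mem_univ j0) ?_
  rw [map_pow, hq0 j0, zero_pow hj0]

lemma split_prod (q : Fin n → MvPolynomial (Fin n) B) (μ : Fin n →₀ ℕ) (j0 : Fin n)
    (h : μ j0 ≠ 0) :
    (∏ j, q j ^ μ j) = q j0 * ∏ j, q j ^ (if j = j0 then μ j0 - 1 else μ j) := by
  have hP : ∏ j ∈ Finset.univ.erase j0, q j ^ μ j
      = ∏ j ∈ Finset.univ.erase j0, q j ^ (if j = j0 then μ j0 - 1 else μ j) :=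
    Finset.prod_congr rfl fun j hj => by
      rw [if_neg (Finset.ne_of_mem_erase hj)]
  calc (∏ j, q j ^ μ j)
      = q j0 ^ μ j0 * ∏ j ∈ Finset.univ.erase j0, q j ^ μ j :=
        (Finset.mul_prod_erase _ _ (Finset.mem_univ j0)).symm
    _ = q j0 * ((q j0 ^ (if j0 = j0 then μ j0 - 1 else μ j0))
          * ∏ j ∈ Finset.univ.erase j0, q j ^ (if j = j0 then μ j0 - 1 else μ j)) := by
        rw [hP, if_pos rfl]
        have h0 : μ j0 = (μ j0 - 1) + 1 := by omega
        rw [← mul_assoc]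
        congr 1
        conv_lhs => rw [h0]
        rw [pow_succ']
    _ = q j0 * ∏ j, q j ^ (if j = j0 then μ j0 - 1 else μ j) := by
        exact congrArg (q j0 * ·)
          (Finset.mul_prod_erase Finset.univ
            (fun j => q j ^ (if j = j0 then μ j0 - 1 else μ j)) (Finset.mem_univ j0))

lemma prod_pow_mem_Wring_succ {A : Subring B} {e : ℕ} {q : Fin n → MvPolynomial (Fin n) B}
    (hq0 : ∀ j, constantCoeff (q j) = 0)
    (hq : ∀ j, q j ∈ Wring A e) {μ : Fin n →₀ ℕ} (hμ : 2 ≤ degF μ) :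
    (∏ j, q j ^ μ j) ∈ Wring A (e + 1) := by
  obtain ⟨j0, hj0⟩ : ∃ j0, μ j0 ≠ 0 := by
    by_contra h
    push_neg at h
    have : degF μ = 0 := Finset.sum_eq_zero fun j _ => h j
    omega
  rw [split_prod q μ j0 hj0]
  set ν : Fin n → ℕ := fun j => if j = j0 then μ j0 - 1 else μ j with hν
  have htail : ∃ j, ν j ≠ 0 := by
    rcases Nat.lt_or_ge (μ j0) 2 with h2 | h2
    · have h1 : μ j0 = 1 := by omega
      have hsum : degF μ = μ j0 + ∑ j ∈ Finset.univ.erase j0, μ j :=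
        (Finset.add_sum_erase _ _ (Finset.mem_univ j0)).symm
      have : ∃ j ∈ Finset.univ.erase j0, μ j ≠ 0 := by
        by_contra h
        push_neg at h
        have : ∑ j ∈ Finset.univ.erase j0, μ j = 0 := Finset.sum_eq_zero h
        omega
      obtain ⟨j, hj, hjne⟩ := this
      refine ⟨j, ?_⟩
      simp only [hν, if_neg (Finset.ne_of_mem_erase hj)]
      exact hjne
    · refine ⟨j0, ?_⟩
      simp only [hν, if_pos rfl]
      omega
  exact mul_mem_Wring_succ (hq0 j0) (constantCoeff_prod_pow hq0 htail)
    (hq j0) (prod_pow_mem_Wring hq ν)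

/-- Key lemma: substituting order-`≥1` polynomials with coefficients in `A` up to degree `e`
into an order-`≥2` polynomial with all coefficients in `A` gives coefficients in `A`
up to degree `e+1`. -/
lemma bind₁_mem_Wring_succ {A : Subring B} {e : ℕ} {p : MvPolynomial (Fin n) B}
    (hpc : ∀ m : Fin n →₀ ℕ, coeff m p ∈ A)
    (hp2 : ∀ m : Fin n →₀ ℕ, degF m ≤ 1 → coeff m p = 0)
    {q : Fin n → MvPolynomial (Fin n) B}
    (hq0 : ∀ j, constantCoeff (q j) = 0)
    (hq : ∀ j, q j ∈ Wring A e) :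
    bind₁ q p ∈ Wring A (e + 1) := by
  have hrep : bind₁ q p = ∑ μ ∈ p.support, bind₁ q (monomial μ (coeff μ p)) := by
    conv_lhs => rw [MvPolynomial.as_sum p]
    exact _root_.map_sum (bind₁ q) (fun μ => monomial μ (coeff μ p)) p.support
  rw [hrep]
  refine Subring.sum_mem _ fun μ hμ => ?_
  rw [bind₁_monomial]
  have hd2 : 2 ≤ degF μ := by
    by_contra h
    have : coeff μ p = 0 := hp2 μ (by omega)
    exact (MvPolynomial.mem_support_iff.mp hμ) this
  have hprod : (∏ i ∈ μ.support, q i ^ μ i) = ∏ i, q i ^ μ i :=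
    Finset.prod_subset (Finset.subset_univ _) (fun i _ hi => by
      rw [Finsupp.notMem_support_iff.mp hi, pow_zero])
  rw [hprod]
  exact mul_mem (C_mem_Wring (hpc μ)) (prod_pow_mem_Wring_succ hq0 hq hd2)

end JacAux

namespace JacAux

variable {B : Type*} [CommRing B] {n : ℕ}

lemma endMapHom_apply {R S : Type*} [CommRing R] [CommRing S] (φ : R →+* S)
    (f : PolyEnd R n) (i : Fin n) :
    endMapHom φ f i = MvPolynomial.map φ (f i) := rfl

lemma constantCoeff_pderiv {R : Type*} [CommRing R] (j : Fin n) (p : MvPolynomial (Fin n) R) :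
    constantCoeff (pderiv j p) = coeff (Finsupp.single j 1) p := by
  induction p using MvPolynomial.induction_on' with
  | add p q hp hq => rw [map_add, map_add, coeff_add, hp, hq]
  | monomial s a =>
      rw [pderiv_monomial, constantCoeff_monomial, coeff_monomial]
      by_cases hs : s = Finsupp.single j 1
      · subst hs
        rw [if_pos rfl, if_pos (by simp), Finsupp.single_apply, if_pos rfl, Nat.cast_one, mul_one]
      · rw [if_neg hs]
        by_cases hsj : s j = 0
        · rw [hsj, Nat.cast_zero, mul_zero]
          split <;> rfl
        · rw [if_neg ?_]
          intro hzero
          apply hs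
          ext k
          have hk := DFunLike.congr_fun hzero k
          rw [Finsupp.tsub_apply, Finsupp.coe_zero, Pi.zero_apply] at hk
          rw [Finsupp.single_apply]
          by_cases hkj : k = j
          · subst hkj
            rw [if_pos rfl]
            have := hk
            rw [Finsupp.single_apply, if_pos rfl] at this
            omega
          · rw [if_neg (by exact fun h => hkj h.symm)]
            have := hk
            rw [Finsupp.single_apply, if_neg (by exact fun h => hkj h.symm)] at this
            omega

lemma degF_eq_one {m : Fin n →₀ ℕ} (hm : degF m = 1) : ∃ j, m = Finsupp.single j 1 := by
  obtain ⟨j0, hj0⟩ : ∃ j0, m j0 ≠ 0 := by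
    by_contra h
    push_neg at h
    have : degF m = 0 := Finset.sum_eq_zero fun j _ => h j
    omega
  have hsum : degF m = m j0 + ∑ j ∈ Finset.univ.erase j0, m j :=
    (Finset.add_sum_erase _ _ (Finset.mem_univ j0)).symm
  have h1 : m j0 = 1 ∧ ∑ j ∈ Finset.univ.erase j0, m j = 0 := by omega
  refine ⟨j0, ?_⟩
  ext k
  rw [Finsupp.single_apply]
  by_cases hk : k = j0
  · subst hk; rw [if_pos rfl]; exact h1.1
  · rw [if_neg fun h => hk h.symm]
    exact Finset.sum_eq_zero_iff.mp h1.2 k (Finset.mem_erase.mpr ⟨hk, Finset.mem_univ k⟩)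

end JacAux

namespace JacAux

variable {B : Type*} [CommRing B] {n : ℕ}

lemma inv_coeff_mem (A : Subring B) (f : PolyEnd (↥A) n)
    (h0 : ∀ i, constantCoeff (f i) = 0)
    (hJ : ∃ u : (↥A)ˣ, PolyEnd.jac f = C ((u : ↥A)))
    (G : PolyEnd B n)
    (hGF : G * endMapHom A.subtype f = 1)
    (hFG : endMapHom A.subtype f * G = 1) :
    ∀ (j : Fin n) (m : Fin n →₀ ℕ), coeff m (G j) ∈ A := by
  set F : PolyEnd B n := endMapHom A.subtype f with hF
  -- constant coefficients of G vanish
  have hG0 : ∀ j, constantCoeff (G j) = 0 := by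
    intro j
    have h1 : bind₁ F (G j) = X j := congrFun hGF j
    have h2 := congrArg (constantCoeff (R := B) (σ := Fin n)) h1
    rw [show constantCoeff (R := B) (σ := Fin n) (bind₁ F (G j)) = eval₂Hom ((constantCoeff (R := B) (σ := Fin n)).comp C) (fun i => constantCoeff (F i)) (G j) from hom_bind₁ _ _ _] at h2
    have h3 : (fun i => constantCoeff (F i)) = fun _ : Fin n => (0 : B) := by
      funext i
      rw [hF, endMapHom_apply, constantCoeff_map, h0 i, map_zero]
    rw [h3] at h2
    have h4 : (constantCoeff (R := B) (σ := Fin n)).comp C = RingHom.id B := by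
      ext a
      simp
    rw [h4] at h2
    have h5 : eval₂Hom (RingHom.id B) (fun _ : Fin n => (0 : B)) (G j)
        = eval (fun _ : Fin n => (0 : B)) (G j) := rfl
    rw [h5, eval_zero'] at h2
    rw [h2, constantCoeff_X]
  -- the linear-part matrix over A and its inverse
  obtain ⟨u, hu⟩ := hJ
  set L : Matrix (Fin n) (Fin n) (↥A) :=
    Matrix.of fun i j => constantCoeff (pderiv j (f i)) with hL
  have hdet : L.det = (u : ↥A) := by
    have h1 : L.det = constantCoeff ((Matrix.of fun i j => pderiv j (f i)).det) :=
      (RingHom.map_det (constantCoeff (R := ↥A) (σ := Fin n))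
        (Matrix.of fun i j => pderiv j (f i))).symm
    have h2 : (Matrix.of fun i j => pderiv j (f i)).det = PolyEnd.jac f := rfl
    rw [h1, h2, hu, constantCoeff_C]
  have hLunit : IsUnit L := (Matrix.isUnit_iff_isUnit_det L).mpr (hdet ▸ u.isUnit)
  obtain ⟨UL, hUL⟩ := hLunit
  set N : Matrix (Fin n) (Fin n) (↥A) := (↑UL⁻¹ : Matrix (Fin n) (Fin n) ↥A) with hN
  have hNL : N * L = 1 := by rw [hN, ← hUL]; exact UL.inv_mul
  have hLN : L * N = 1 := by rw [hN, ← hUL]; exact UL.mul_inv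
  -- coerced matrices over B
  set L' : Matrix (Fin n) (Fin n) B := L.map A.subtype with hL'
  set N' : Matrix (Fin n) (Fin n) B := N.map A.subtype with hN'
  have hN'L' : N' * L' = 1 := by
    rw [hN', hL', ← Matrix.map_mul, hNL, Matrix.map_one _ (map_zero _) (map_one _)]
  -- the higher-order part of F
  set h : Fin n → MvPolynomial (Fin n) B := fun i => F i - ∑ j, C (L' i j) * X j with hh
  have hlin : ∀ i j, coeff (Finsupp.single j 1) (F i) = L' i j := by
    intro i j
    rw [hF, endMapHom_apply, coeff_map]
    exact congrArg A.subtype (constantCoeff_pderiv j (f i)).symm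
  have hpc : ∀ i (m : Fin n →₀ ℕ), coeff m (h i) ∈ A := by
    intro i m
    rw [hh]
    simp only [coeff_sub]
    refine sub_mem ?_ ?_
    · rw [hF, endMapHom_apply, coeff_map]
      exact (coeff m (f i)).2
    · rw [coeff_sum]
      refine Subring.sum_mem _ fun j _ => ?_
      rw [coeff_C_mul, coeff_X']
      split
      · rw [mul_one]; exact (L i j).2
      · rw [mul_zero]; exact zero_mem _
  have hp2 : ∀ i (m : Fin n →₀ ℕ), degF m ≤ 1 → coeff m (h i) = 0 := by
    intro i m hm
    rw [hh]
    simp only [coeff_sub]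
    rcases Nat.lt_or_ge (degF m) 1 with hdeg | hdeg
    · have hm0 : m = 0 := degF_eq_zero_iff.mp (by omega)
      subst hm0
      have c1 : coeff (0 : Fin n →₀ ℕ) (F i) = 0 := by
        rw [hF, endMapHom_apply, ← constantCoeff_eq, constantCoeff_map, h0 i, map_zero]
      rw [c1, coeff_sum]
      have c2 : ∀ j ∈ Finset.univ, coeff (0 : Fin n →₀ ℕ) (C (L' i j) * X j) = 0 := by
        intro j _
        rw [coeff_C_mul, coeff_X', if_neg, mul_zero]
        intro hcon
        rw [Finsupp.single_eq_zero] at hcon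
        exact one_ne_zero hcon
      rw [Finset.sum_eq_zero c2, sub_zero]
    · have hdeg1 : degF m = 1 := by omega
      obtain ⟨j0, rfl⟩ := degF_eq_one hdeg1
      rw [hlin i j0, coeff_sum]
      have c2 : ∀ j ∈ Finset.univ,
          coeff (Finsupp.single j0 1) (C (L' i j) * X j)
            = if j = j0 then L' i j0 else 0 := by
        intro j _
        rw [coeff_C_mul, coeff_X']
        by_cases hj : j = j0
        · subst hj; rw [if_pos rfl, if_pos rfl, mul_one]
        · rw [if_neg, if_neg hj, mul_zero]
          intro hcon
          exact hj (Finsupp.single_left_injective one_ne_zero hcon)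
      rw [Finset.sum_congr rfl c2, Finset.sum_ite_eq' Finset.univ j0 (fun _ => L' i j0),
        if_pos (Finset.mem_univ j0), sub_self]
  -- the recursion
  have hrec : ∀ j, G j = ∑ i, C (N' j i) * (X i - bind₁ G (h i)) := by
    intro j
    have hstep : ∀ i, X i - bind₁ G (h i) = ∑ k, C (L' i k) * G k := by
      intro i
      have e1 : bind₁ G (F i) = X i := congrFun hFG i
      rw [hh]
      simp only [map_sub, map_sum, map_mul, bind₁_C_right, bind₁_X_right, e1]
      simp only [show ∀ x, (bind₁ G) (X x) = G x from fun x => bind₁_X_right G x,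
        show ∀ a, (bind₁ G) (C a) = C a from fun a => bind₁_C_right G a]
      exact sub_sub_cancel _ _
    have hone : ∀ k, C ((1 : Matrix (Fin n) (Fin n) B) j k) * G k
        = if k = j then G k else 0 := by
      intro k
      by_cases hk : k = j
      · subst hk; rw [Matrix.one_apply_eq, map_one, one_mul, if_pos rfl]
      · rw [Matrix.one_apply_ne (Ne.symm hk), map_zero, zero_mul, if_neg hk]
    calc G j = ∑ k, C ((1 : Matrix (Fin n) (Fin n) B) j k) * G k := by
          symm
          rw [Finset.sum_congr rfl fun k _ => hone k,
            Finset.sum_ite_eq' Finset.univ j (fun k => G k), if_pos (Finset.mem_univ j)]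
      _ = ∑ k, C ((N' * L') j k) * G k := by rw [hN'L']
      _ = ∑ i, C (N' j i) * (X i - bind₁ G (h i)) := by
          simp only [Matrix.mul_apply, map_sum, Finset.sum_mul]
          rw [Finset.sum_comm]
          refine Finset.sum_congr rfl fun i _ => ?_
          rw [hstep i, Finset.mul_sum]
          refine Finset.sum_congr rfl fun k _ => ?_
          rw [C_mul]
          ring
  -- induction on the degree
  have main : ∀ (e : ℕ) (j : Fin n), G j ∈ Wring A e := by
    intro e
    induction e with
    | zero =>
        intro j m hm
        have : m = 0 := degF_eq_zero_iff.mp (by omega)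
        subst this
        rw [← constantCoeff_eq (R := B) (σ := Fin n)]
        show constantCoeff (G j) ∈ A
        rw [hG0 j]
        exact zero_mem _
    | succ e ih =>
        intro j
        rw [hrec j]
        refine Subring.sum_mem _ fun i _ => ?_
        refine mul_mem (C_mem_Wring ?_) (sub_mem (X_mem_Wring i) ?_)
        · rw [hN', Matrix.map_apply]; exact (N j i).2
        · exact bind₁_mem_Wring_succ (hpc i) (hp2 i) hG0 (fun j' => ih j') 
  intro j m
  exact main (degF m) j m le_rfl

end JacAux

namespace JacAux

variable {B : Type*} [CommRing B] {n : ℕ}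

set_option synthInstance.maxHeartbeats 1000000 in
lemma exists_preimage (A : Subring B) (p : MvPolynomial (Fin n) B)
    (hc : ∀ m, coeff m p ∈ A) :
    ∃ p₀ : MvPolynomial (Fin n) (↥A), MvPolynomial.map A.subtype p₀ = p := by
  refine ⟨∑ m ∈ p.support, monomial m (⟨coeff m p, hc m⟩ : ↥A), ?_⟩
  rw [_root_.map_sum (MvPolynomial.map A.subtype)
    (fun m => monomial m (⟨coeff m p, hc m⟩ : ↥A)) p.support]
  have : ∀ m ∈ p.support,
      MvPolynomial.map A.subtype (monomial m (⟨coeff m p, hc m⟩ : ↥A))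
        = monomial m (coeff m p) := by
    intro m _
    rw [map_monomial]
    rfl
  rw [Finset.sum_congr rfl this, support_sum_monomial_coeff]

lemma endMapHom_translEnd {R S : Type*} [CommRing R] [CommRing S] (φ : R →+* S)
    (c : Fin n → R) :
    endMapHom φ (translEnd c) = translEnd (fun i => φ (c i)) := by
  funext i
  show MvPolynomial.map φ (X i + C (c i)) = X i + C (φ (c i))
  rw [map_add, map_X, map_C]

lemma isUnit_translEnd {R : Type*} [CommRing R] (c : Fin n → R) :
    IsUnit (translEnd c : PolyEnd R n) := ⟨transl c, rfl⟩

lemma endMapHom_injective (A : Subring B) :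
    Function.Injective (endMapHom (n := n) A.subtype) := by
  intro a b hab
  funext i
  exact MvPolynomial.map_injective A.subtype Subtype.val_injective (congrFun hab i)

lemma isUnit_core (A : Subring B) (f : PolyEnd (↥A) n)
    (hB : IsUnit (endMapHom (A.subtype) f))
    (hJ : ∃ u : (↥A)ˣ, PolyEnd.jac f = C ((u : ↥A))) : IsUnit f := by
  classical
  set c : Fin n → ↥A := fun i => constantCoeff (f i) with hc
  set f' : PolyEnd (↥A) n := translEnd (-c) * f with hf'
  have hf'app : ∀ i, f' i = f i - C (c i) := by
    intro i
    show bind₁ f (translEnd (-c) i) = _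
    show bind₁ f (X i + C (-c i)) = _
    rw [map_add, show bind₁ f (X i) = f i from bind₁_X_right f i,
      show bind₁ f (C (-c i)) = C (-c i) from bind₁_C_right f _, map_neg]
    ring
  have h0' : ∀ i, constantCoeff (f' i) = 0 := by
    intro i
    rw [hf'app i, map_sub, constantCoeff_C, hc]
    exact sub_self _
  have hJ' : ∃ u : (↥A)ˣ, PolyEnd.jac f' = C ((u : ↥A)) := by
    obtain ⟨u, hu⟩ := hJ
    refine ⟨u, ?_⟩
    rw [hf', PolyEnd.jac_mul, jac_translEnd, map_one, one_mul, hu]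
  have hB' : IsUnit (endMapHom (A.subtype) f') := by
    rw [hf', map_mul, endMapHom_translEnd]
    exact (isUnit_translEnd _).mul hB
  obtain ⟨v, hv⟩ := hB'
  have hGF : (↑v⁻¹ : PolyEnd B n) * endMapHom A.subtype f' = 1 := by
    rw [← hv]; exact v.inv_mul
  have hFG : endMapHom A.subtype f' * (↑v⁻¹ : PolyEnd B n) = 1 := by
    rw [← hv]; exact v.mul_inv
  have hcoeffs := inv_coeff_mem A f' h0' hJ' (↑v⁻¹ : PolyEnd B n) hGF hFG
  choose g' hg' using fun j => exists_preimage A ((↑v⁻¹ : PolyEnd B n) j) (hcoeffs j)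
  have g₀ : PolyEnd (↥A) n := g'
  have hmapg : endMapHom A.subtype (show PolyEnd (↥A) n from g') = (↑v⁻¹ : PolyEnd B n) :=
    funext hg'
  have hfg : f' * (show PolyEnd (↥A) n from g') = 1 := by
    apply endMapHom_injective A
    rw [map_mul, map_one, hmapg, ← hv]
    exact v.mul_inv
  have hgf : (show PolyEnd (↥A) n from g') * f' = 1 := by
    apply endMapHom_injective A
    rw [map_mul, map_one, hmapg, ← hv]
    exact v.inv_mul
  have hf'unit : IsUnit f' := ⟨⟨f', (show PolyEnd (↥A) n from g'), hfg, hgf⟩, rfl⟩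
  have hfeq : f = translEnd c * f' := by
    rw [hf', ← mul_assoc, translEnd_mul, add_neg_cancel, translEnd_zero, one_mul]
  rw [hfeq]
  exact (isUnit_translEnd c).mul hf'unit

end JacAux



lemma mv_isUnit_eq_C {R : Type*} [CommRing R] [IsDomain R] :
    ∀ {n : ℕ} {p : MvPolynomial (Fin n) R}, IsUnit p → ∃ a : Rˣ, p = C (a : R) := by
  intro n
  induction n with
  | zero =>
      intro p hp
      obtain ⟨a, rfl⟩ := MvPolynomial.C_surjective (Fin 0) p
      have ha : IsUnit a := by
        have := hp.map (constantCoeff (σ := Fin 0) (R := R))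
        simpa using this
      exact ⟨ha.unit, by simp⟩
  | succ n ih =>
      intro p hp
      have h1 : IsUnit (finSuccEquiv R n p) := hp.map (finSuccEquiv R n)
      obtain ⟨r, hr, hrp⟩ := Polynomial.isUnit_iff.mp h1
      obtain ⟨a, ha⟩ := ih hr
      refine ⟨a, ?_⟩
      apply (finSuccEquiv R n).injective
      rw [← hrp, ha]
      simp [MvPolynomial.finSuccEquiv_apply]


/-- **Lemma.**  Let `B` be an integral domain and `A ⊆ B` a subring.  An endomorphism over `A`
which is invertible over `B` and whose Jacobian is a unit of `A` is invertible over `A`;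
consequently `Aut_A(𝔸ⁿ) = {f ∈ End_A(𝔸ⁿ) ∩ Aut_B(𝔸ⁿ) : Jac(f) ∈ A^*}`. -/
theorem isUnit_of_isUnit_map_of_jac_unit {B : Type*} [CommRing B] [IsDomain B] (A : Subring B)
    {n : ℕ} (hn : 1 ≤ n) (f : PolyEnd A n)
    (hB : IsUnit (endMapHom (A.subtype) f))
    (hJ : ∃ u : (↥A)ˣ, PolyEnd.jac f = C (u : ↥A)) :
    IsUnit f ∧
      ∀ g : PolyEnd A n, IsUnit g ↔
        (IsUnit (endMapHom (A.subtype) g) ∧ ∃ u : (↥A)ˣ, PolyEnd.jac g = C (u : ↥A)) := by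
  refine ⟨JacAux.isUnit_core A f hB hJ, fun g => ⟨fun hg => ⟨hg.map _, ?_⟩,
    fun ⟨hBg, hJg⟩ => JacAux.isUnit_core A g hBg hJg⟩⟩
  obtain ⟨v, hv⟩ := hg
  have h1 : PolyEnd.jac ((↑v⁻¹ : PolyEnd ↥A n) * g) = 1 := by
    rw [← hv, v.inv_mul, PolyEnd.jac_one]
  rw [PolyEnd.jac_mul] at h1
  have hunit : IsUnit (PolyEnd.jac g) :=
    IsUnit.of_mul_eq_one _ (by rw [mul_comm]; exact h1)
  obtain ⟨a, ha⟩ := mv_isUnit_eq_C hunit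
  exact ⟨a, ha⟩
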